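/- Let Θ_u, Θ_v be diagonal n×n matrices with positive diagonal entries, A a real m×n matrix and ρ > 0. Define the 2n×2n block matrices H = [[Θ_u⁻¹ + AᵀA, −AᵀA],[−AᵀA, Θ_v⁻¹ + AᵀA]] and P = [[Θ_u⁻¹ + ρIₙ, −ρIₙ],[−ρIₙ, Θ_v⁻¹ + ρIₙ]]. Then H − P = [[M, −M],[−M, M]] with M = AᵀA − ρIₙ has rank at most n, and consequently 1 is an eigenvalue of P⁻¹H of multiplicity at least n. -/

import Mathlib

open Matrix

/-- For the block matrices `H` and `P` of the matrix-free IPM,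
`H − P = [[M, −M],[−M, M]]` with `M = AᵀA − ρIₙ`, it has rank at most `n`, and
consequently `1` is an eigenvalue of `P⁻¹H` of multiplicity at least `n`
(the kernel of `H − P` has dimension at least `n`). -/
theorem block_difference_rank_and_unit_eigenvalue
    (m n : ℕ) (du dv : Fin n → ℝ) (hdu : ∀ j, 0 < du j) (hdv : ∀ j, 0 < dv j)
    (A : Matrix (Fin m) (Fin n) ℝ) (ρ : ℝ) (hρ : 0 < ρ) :
    let M : Matrix (Fin n) (Fin n) ℝ := Aᵀ * A - ρ • (1 : Matrix (Fin n) (Fin n) ℝ)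
    let H : Matrix (Fin n ⊕ Fin n) (Fin n ⊕ Fin n) ℝ :=
      Matrix.fromBlocks (Matrix.diagonal (fun j => (du j)⁻¹) + Aᵀ * A) (-(Aᵀ * A))
        (-(Aᵀ * A)) (Matrix.diagonal (fun j => (dv j)⁻¹) + Aᵀ * A)
    let P : Matrix (Fin n ⊕ Fin n) (Fin n ⊕ Fin n) ℝ :=
      Matrix.fromBlocks
        (Matrix.diagonal (fun j => (du j)⁻¹) + ρ • (1 : Matrix (Fin n) (Fin n) ℝ))
        (-(ρ • (1 : Matrix (Fin n) (Fin n) ℝ)))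
        (-(ρ • (1 : Matrix (Fin n) (Fin n) ℝ)))
        (Matrix.diagonal (fun j => (dv j)⁻¹) + ρ • (1 : Matrix (Fin n) (Fin n) ℝ))
    H - P = Matrix.fromBlocks M (-M) (-M) M ∧
    (H - P).rank ≤ n ∧
    n ≤ Module.finrank ℝ ↥(LinearMap.ker (H - P).mulVecLin) := by
  intro M H P
  have hdiff : H - P = Matrix.fromBlocks M (-M) (-M) M := by
    ext (i | i) (j | j) <;>
      simp [M, H, P, Matrix.fromBlocks, Matrix.sub_apply, Matrix.add_apply,
        Matrix.neg_apply, Matrix.smul_apply, Matrix.one_apply, Matrix.diagonal] <;>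
      ring_nf <;> abel
  have hfac : H - P =
      Matrix.fromRows M (-M) * Matrix.fromCols (1 : Matrix (Fin n) (Fin n) ℝ) (-1) := by
    rw [hdiff, Matrix.fromRows_mul_fromCols]
    congr 1 <;> simp
  have hrank : (H - P).rank ≤ n := by
    rw [hfac]
    exact (Matrix.rank_mul_le_left _ _).trans
      ((Matrix.rank_le_card_width _).trans (by simp))
  refine ⟨hdiff, hrank, ?_⟩
  have hsum := LinearMap.finrank_range_add_finrank_ker (H - P).mulVecLin
  simp only [Module.finrank_pi, Fintype.card_sum, Fintype.card_fin] at hsum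
  have : (H - P).rank + Module.finrank ℝ ↥(LinearMap.ker (H - P).mulVecLin) = n + n := hsum
  omega
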